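/- Every scattered topological space is hereditarily Baire: if every nonempty subset of X has an isolated point, then every closed subspace of X is a Baire space. -/

import Mathlib

open Set Filter Topology

/-- A map is Baire-one if it is a pointwise limit of continuous maps. -/
def BaireOne {X Y : Type*} [TopologicalSpace X] [TopologicalSpace Y] (f : X → Y) : Prop :=
  ∃ g : ℕ → X → Y, (∀ n, Continuous (g n)) ∧
    ∀ x, Filter.Tendsto (fun n => g n x) Filter.atTop (nhds (f x))

/-- A regular transfinite sequence of open sets in `X`. -/
def RegularSeq {X : Type*} [TopologicalSpace X] (α : Ordinal.{0}) (U : Ordinal.{0} → Set X) : Prop :=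
  (∀ ξ, ξ ≤ α → IsOpen (U ξ)) ∧ U 0 = ∅ ∧ U α = Set.univ ∧
  (∀ ξ η, ξ ≤ η → η ≤ α → U ξ ⊆ U η) ∧
  (∀ γ, γ ≤ α → Order.IsSuccLimit γ → U γ = ⋃ ξ < γ, U ξ)

/-- A functionally open set: the preimage of `(0,1]` under a continuous map to `[0,1]`. -/
def FunctionallyOpen {X : Type*} [TopologicalSpace X] (U : Set X) : Prop :=
  ∃ φ : X → ℝ, Continuous φ ∧ (∀ x, φ x ∈ Set.Icc (0:ℝ) 1) ∧ U = φ ⁻¹' Set.Ioc (0:ℝ) 1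

/-- A map is functionally countably fragmented. -/
def FunctCountFrag {X Y : Type*} [TopologicalSpace X] [MetricSpace Y] (f : X → Y) : Prop :=
  ∀ ε : ℝ, 0 < ε → ∃ (α : Ordinal.{0}) (U : Ordinal.{0} → Set X),
    α.card ≤ Cardinal.aleph0 ∧ RegularSeq α U ∧ (∀ ξ, ξ ≤ α → FunctionallyOpen (U ξ)) ∧
    ∀ ξ, ξ < α → Metric.diam (f '' (U (ξ + 1) \ U ξ)) < ε

theorem baire_of_scattered_aux {Z : Type*} [TopologicalSpace Z]
    (h : ∀ A : Set Z, A.Nonempty → ∃ a ∈ A, ∃ V : Set Z, IsOpen V ∧ V ∩ A = {a}) :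
    BaireSpace Z := by
  constructor
  intro f ho hd
  rw [dense_iff_inter_open]
  intro W hW hWne
  obtain ⟨a, haW, V, hV, hVW⟩ := h W hWne
  have hopen : IsOpen ({a} : Set Z) := hVW ▸ hV.inter hW
  refine ⟨a, haW, mem_iInter.2 fun n => ?_⟩
  obtain ⟨x, hx1, hx2⟩ := (dense_iff_inter_open.1 (hd n)) {a} hopen ⟨a, rfl⟩
  rwa [mem_singleton_iff.1 hx1] at hx2

theorem stmt16 {X : Type*} [TopologicalSpace X]
    (hscat : ∀ A : Set X, A.Nonempty → ∃ a ∈ A, ∃ V : Set X, IsOpen V ∧ V ∩ A = {a}) :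
    ∀ F : Set X, IsClosed F → BaireSpace F := by
  intro F _
  apply baire_of_scattered_aux
  intro A hA
  obtain ⟨⟨a, haF⟩, haA⟩ := hA
  obtain ⟨b, hb, V, hV, hVA⟩ := hscat ((↑) '' A) ⟨a, ⟨a, haF⟩, haA, rfl⟩
  obtain ⟨c, hcA, rfl⟩ := hb
  refine ⟨c, hcA, (↑) ⁻¹' V, hV.preimage continuous_subtype_val, ?_⟩
  ext x
  simp only [mem_inter_iff, mem_preimage, mem_singleton_iff]
  constructor
  · rintro ⟨hxV, hxA⟩
    have : (x : X) ∈ V ∩ ((↑) '' A) := ⟨hxV, x, hxA, rfl⟩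
    rw [hVA, mem_singleton_iff] at this
    exact Subtype.ext this
  · rintro rfl
    have : (x : X) ∈ V ∩ ((↑) '' A) := hVA ▸ rfl
    exact ⟨this.1, hcA⟩
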